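/- Let G be a finite connected simple graph, r ∈ ℕ, D a distance-r dominating set of G, and id : V(G) → ℕ injective. Contracting each class B(v) of the D-partition to a single vertex yields a connected depth-r minor of G; concretely: the sets B(v) (v ∈ D) are nonempty, pairwise disjoint, cover V(G), each induces a connected subgraph of G of radius at most r, and the graph H on vertex set D in which distinct u,v ∈ D are adjacent if and only if some edge of G joins a vertex of B(u) to a vertex of B(v) is connected. -/

import Mathlib

set_option linter.unusedSectionVars false
set_option linter.unusedVariables false
open SimpleGraph

/-- `u` is weakly `s`-reachable from `v` w.r.t. the linear order on `V`:
there is a path of length at most `s` between `u` and `v` on which `u` is minimum. -/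
def wreach {V : Type*} [LinearOrder V] (G : SimpleGraph V) (s : ℕ) (v : V) : Set V :=
  {u | ∃ p : G.Walk u v, p.IsPath ∧ p.length ≤ s ∧ ∀ x ∈ p.support, u ≤ x}

/-- The closed `r`-neighborhood `N_r[v]`. -/
def ball {V : Type*} (G : SimpleGraph V) (r : ℕ) (v : V) : Set V :=
  {u | ∃ p : G.Walk v u, p.length ≤ r}

/-- `D` is a distance-`r` dominating set. -/
def isRDom {V : Type*} (G : SimpleGraph V) (r : ℕ) (D : Set V) : Prop :=
  ∀ w : V, ∃ v ∈ D, w ∈ ball G r v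

/-- The lexicographic order on paths with respect to an injection `idf : V → ℕ`:
a shorter path is smaller; paths of equal length are compared by the lexicographic
order of the `idf`-sequences of their vertices. -/
def walkLE {V : Type*} (idf : V → ℕ) {G : SimpleGraph V} {a b c d : V}
    (p : G.Walk a b) (q : G.Walk c d) : Prop :=
  p.length < q.length ∨ (p.length = q.length ∧ p.support.map idf ≤ q.support.map idf)

/-- The class of `v` in the `D`-partition, with respect to a choice `P` of
lexicographically least paths: `B(v) = {w : P(v,w) ≤_lex P(u,w) for all u ∈ D, u ≠ v}`. -/
def Bpart {V : Type*} {G : SimpleGraph V} (idf : V → ℕ) (D : Set V)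
    (P : ∀ v w : V, G.Walk v w) (v : V) : Set V :=
  {w | ∀ u ∈ D, u ≠ v → walkLE idf (P v w) (P u w)}


theorem myLexAppend {α : Type*} {r : α → α → Prop} {l1 l2 : List α}
    (h : List.Lex r l1 l2) (hl : l1.length = l2.length) (t : List α) :
    List.Lex r (l1 ++ t) (l2 ++ t) := by
  induction h with
  | nil => simp at hl
  | cons h ih => exact List.Lex.cons (ih (by simpa using hl))
  | rel h => exact List.Lex.rel h

theorem myBypassLt {V : Type*} [DecidableEq V] {G : SimpleGraph V} {a b : V} (W : G.Walk a b)
    (h : ¬ W.IsPath) : W.bypass.length < W.length := by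
  rcases lt_or_ge W.bypass.length W.length with h1 | h1
  · exact h1
  · exact absurd (W.bypass_eq_self_of_length_le h1 ▸ W.bypass_isPath) h

noncomputable def wkey {V : Type*} (idf : V → ℕ) {G : SimpleGraph V} {a b : V}
    (p : G.Walk a b) : ℕ ×ₗ List ℕ :=
  toLex (p.length, p.support.map idf)

theorem walkLE_iff {V : Type*} (idf : V → ℕ) {G : SimpleGraph V} {a b c d : V}
    (p : G.Walk a b) (q : G.Walk c d) : walkLE idf p q ↔ wkey idf p ≤ wkey idf q := by
  rw [wkey, wkey, Prod.Lex.le_iff]; rfl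

theorem wkey_lt_iff {V : Type*} (idf : V → ℕ) {G : SimpleGraph V} {a b c d : V}
    (p : G.Walk a b) (q : G.Walk c d) :
    wkey idf p < wkey idf q ↔
      (p.length < q.length ∨ (p.length = q.length ∧ p.support.map idf < q.support.map idf)) := by
  rw [wkey, wkey, Prod.Lex.lt_iff]; rfl

theorem length_le_of_wkey_le {V : Type*} {idf : V → ℕ} {G : SimpleGraph V} {a b c d : V}
    {p : G.Walk a b} {q : G.Walk c d} (h : wkey idf p ≤ wkey idf q) : p.length ≤ q.length := by
  rw [wkey, wkey, Prod.Lex.le_iff] at h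
  rcases h with h | ⟨h, -⟩
  · exact h.le
  · exact h.le

theorem wkey_lt_of_length_lt {V : Type*} (idf : V → ℕ) {G : SimpleGraph V} {a b c d : V}
    {p : G.Walk a b} {q : G.Walk c d} (h : p.length < q.length) :
    wkey idf p < wkey idf q := (wkey_lt_iff idf p q).2 (Or.inl h)

section Main

variable {V : Type*} [DecidableEq V] {G : SimpleGraph V} {r : ℕ} {D : Set V}
  {idf : V → ℕ} {P : ∀ v w : V, G.Walk v w}

theorem Pmin (hP : ∀ v w : V, (P v w).IsPath ∧
      ∀ q : G.Walk v w, q.IsPath → walkLE idf (P v w) q)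
    {v w : V} (q : G.Walk v w) (hq : q.IsPath) : wkey idf (P v w) ≤ wkey idf q :=
  (walkLE_iff idf _ q).1 ((hP v w).2 q hq)

theorem mem_self (hP : ∀ v w : V, (P v w).IsPath ∧
      ∀ q : G.Walk v w, q.IsPath → walkLE idf (P v w) q) (v : V) :
    v ∈ Bpart idf D P v := by
  intro u hu hne
  have h0 : (P v v).length = 0 := by
    have := length_le_of_wkey_le (Pmin hP (Walk.nil : G.Walk v v) Walk.IsPath.nil)
    simpa using this
  left
  rw [h0]
  rcases Nat.eq_zero_or_pos (P u v).length with h | h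
  · exact absurd (Walk.eq_of_length_eq_zero h) hne
  · exact h

theorem head_map_support {a b : V} (p : G.Walk a b) :
    p.support.map idf = idf a :: (p.support.tail.map idf) := by
  conv_lhs => rw [Walk.support_eq_cons p]
  rw [List.map_cons]

theorem eq_of_wkey_eq (hinj : Function.Injective idf) {a b c : V}
    {p : G.Walk a c} {q : G.Walk b c} (h : wkey idf p = wkey idf q) : a = b := by
  rw [wkey, wkey] at h
  have h2 : p.support.map idf = q.support.map idf := congrArg (ofLex · |>.2) h
  rw [head_map_support, head_map_support] at h2
  exact hinj (List.cons.injEq .. ▸ h2 |>.1)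

theorem unique_part (hinj : Function.Injective idf)
    {v u w : V} (hv : v ∈ D) (hu : u ∈ D) (hne : v ≠ u)
    (hwv : w ∈ Bpart idf D P v) (hwu : w ∈ Bpart idf D P u) : False := by
  have h1 := (walkLE_iff idf _ _).1 (hwv u hu hne.symm)
  have h2 := (walkLE_iff idf _ _).1 (hwu v hv hne)
  exact hne (eq_of_wkey_eq hinj (le_antisymm h1 h2))

theorem cover [Finite V] (hD : ∀ w : V, ∃ v ∈ D, ∃ p : G.Walk v w, p.length ≤ r)
    (w : V) : ∃ v ∈ D, w ∈ Bpart idf D P v := by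
  obtain ⟨d, hd, -⟩ := hD w
  obtain ⟨v, hv, hmin⟩ := Set.exists_min_image D (fun u => wkey idf (P u w)) D.toFinite ⟨d, hd⟩
  exact ⟨v, hv, fun u hu _ => (walkLE_iff idf _ _).2 (hmin u hu)⟩

theorem prefix_mem (hinj : Function.Injective idf)
    (hP : ∀ v w : V, (P v w).IsPath ∧
      ∀ q : G.Walk v w, q.IsPath → walkLE idf (P v w) q)
    {v w : V} (hw : w ∈ Bpart idf D P v)
    {x : V} (hx : x ∈ (P v w).support) : x ∈ Bpart idf D P v := by
  intro u hu hne
  by_contra hcon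
  have hlt : wkey idf (P u x) < wkey idf (P v x) :=
    lt_of_not_ge (fun h => hcon ((walkLE_iff idf _ _).2 h))
  have hpath := (hP v w).1
  have hspec : ((P v w).takeUntil x hx).append ((P v w).dropUntil x hx) = P v w :=
    Walk.take_spec (P v w) hx
  set t := (P v w).takeUntil x hx with ht_def
  set dq := (P v w).dropUntil x hx with hd_def
  have htp : t.IsPath := hpath.takeUntil hx
  have hA : wkey idf (P v x) ≤ wkey idf t := Pmin hP t htp
  have hlt2 : wkey idf (P u x) < wkey idf t := lt_of_lt_of_le hlt hA
  have hlenp : t.length + dq.length = (P v w).length := by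
    conv_rhs => rw [← hspec]
    rw [Walk.length_append]
  set W := (P u x).append dq with hW_def
  have hWlen : W.length = (P u x).length + dq.length := Walk.length_append _ _
  have hwle : wkey idf (P v w) ≤ wkey idf (P u w) := (walkLE_iff idf _ _).1 (hw u hu hne)
  have final : wkey idf (P u w) < wkey idf (P v w) → False :=
    fun h => absurd hwle (not_le_of_gt h)
  rcases (wkey_lt_iff idf _ _).1 hlt2 with hlen | ⟨hlen, hlist⟩
  · apply final
    apply wkey_lt_of_length_lt
    calc (P u w).length ≤ W.bypass.length :=
            length_le_of_wkey_le (Pmin hP W.bypass W.bypass_isPath)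
      _ ≤ W.length := W.length_bypass_le
      _ = (P u x).length + dq.length := hWlen
      _ < t.length + dq.length := by omega
      _ = (P v w).length := hlenp
  · by_cases hWp : W.IsPath
    · apply final
      have h1 : wkey idf (P u w) ≤ wkey idf W := Pmin hP W hWp
      have h2 : wkey idf W < wkey idf (P v w) := by
        rw [wkey_lt_iff]
        right
        constructor
        · omega
        · have e1 : W.support.map idf
              = (P u x).support.map idf ++ (dq.support.tail.map idf) := by
            rw [hW_def, Walk.support_append, List.map_append]
          have e2 : (P v w).support.map idf
              = t.support.map idf ++ (dq.support.tail.map idf) := by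
            conv_lhs => rw [← hspec]
            rw [Walk.support_append, List.map_append]
          rw [e1, e2]
          exact myLexAppend hlist (by simp [Walk.length_support, hlen]) _
      exact lt_of_le_of_lt h1 h2
    · apply final
      apply wkey_lt_of_length_lt
      calc (P u w).length ≤ W.bypass.length :=
            length_le_of_wkey_le (Pmin hP W.bypass W.bypass_isPath)
        _ < W.length := myBypassLt W hWp
        _ = (P u x).length + dq.length := hWlen
        _ ≤ t.length + dq.length := by omega
        _ = (P v w).length := hlenp

theorem short_path (hD : ∀ w : V, ∃ v ∈ D, ∃ p : G.Walk v w, p.length ≤ r)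
    (hP : ∀ v w : V, (P v w).IsPath ∧
      ∀ q : G.Walk v w, q.IsPath → walkLE idf (P v w) q)
    {v w : V} (hv : v ∈ D) (hw : w ∈ Bpart idf D P v) : (P v w).length ≤ r := by
  obtain ⟨u, hu, q, hq⟩ := hD w
  have h1 : (P u w).length ≤ r :=
    le_trans (length_le_of_wkey_le (Pmin hP q.bypass q.bypass_isPath))
      (le_trans q.length_bypass_le hq)
  by_cases h : u = v
  · subst h; exact h1
  · exact le_trans (length_le_of_wkey_le ((walkLE_iff idf _ _).1 (hw u hu h))) h1

theorem reach_induce {s : Set V} : ∀ {a b : V} (p : G.Walk a b)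
    (hp : ∀ x ∈ p.support, x ∈ s) (ha : a ∈ s) (hb : b ∈ s),
    (G.induce s).Reachable ⟨a, ha⟩ ⟨b, hb⟩ := by
  intro a b p
  induction p with
  | nil => intro hp ha hb; exact Reachable.refl _
  | @cons a c b hadj q ih =>
    intro hp ha hb
    have hc : c ∈ s := hp c (by simp)
    have h1 : (G.induce s).Adj ⟨a, ha⟩ ⟨c, hc⟩ := by
      exact hadj
    exact (h1.reachable).trans (ih (fun x hx => hp x (by simp [hx])) hc hb)

theorem H_reach [Finite V] (hinj : Function.Injective idf)
    (hP : ∀ v w : V, (P v w).IsPath ∧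
      ∀ q : G.Walk v w, q.IsPath → walkLE idf (P v w) q)
    (hD : ∀ w : V, ∃ v ∈ D, ∃ p : G.Walk v w, p.length ≤ r) :
    ∀ {a b : V} (p : G.Walk a b) (d : V) (hd : d ∈ D) (hda : a ∈ Bpart idf D P d)
      (e : V) (he : e ∈ D) (heb : b ∈ Bpart idf D P e),
      (SimpleGraph.fromRel (fun u v : D =>
        ∃ a ∈ Bpart idf D P u.1, ∃ b ∈ Bpart idf D P v.1, G.Adj a b)).Reachable
        ⟨d, hd⟩ ⟨e, he⟩ := by
  intro a b p
  induction p with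
  | nil =>
    intro d hd hda e he heb
    rcases eq_or_ne d e with rfl | hne
    · exact Reachable.refl _
    · exact (unique_part hinj hd he hne hda heb).elim
  | @cons a c b hadj q ih =>
    intro d hd hda e he heb
    obtain ⟨f, hf, hfc⟩ := cover (r := r) hD c
    refine Reachable.trans ?_ (ih f hf hfc e he heb)
    rcases eq_or_ne d f with rfl | hne
    · exact Reachable.refl _
    · apply SimpleGraph.Adj.reachable
      rw [SimpleGraph.fromRel_adj]
      exact ⟨by simpa [Subtype.ext_iff] using hne, Or.inl ⟨a, hda, c, hfc, hadj⟩⟩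

end Main

/-- contracting the classes `B(v)` (`v ∈ D`) of the `D`-partition yields a
connected depth-`r` minor of `G`: the classes are nonempty, pairwise disjoint, cover
`V(G)`, each induces a connected subgraph of radius at most `r` (with center `v`), and
the graph `H` on `D` in which distinct `u,v` are adjacent iff some edge of `G` joins
`B(u)` to `B(v)` is connected. -/
theorem stmt11 {V : Type*} [Fintype V] (G : SimpleGraph V) (hG : G.Connected) (r : ℕ)
    (D : Set V) (hD : isRDom G r D)
    (idf : V → ℕ) (hinj : Function.Injective idf)
    (P : ∀ v w : V, G.Walk v w)
    (hP : ∀ v w : V, (P v w).IsPath ∧ ∀ q : G.Walk v w, q.IsPath → walkLE idf (P v w) q) :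
    (∀ v ∈ D, (Bpart idf D P v).Nonempty) ∧
    (∀ v ∈ D, ∀ u ∈ D, v ≠ u → Disjoint (Bpart idf D P v) (Bpart idf D P u)) ∧
    (∀ w : V, ∃ v ∈ D, w ∈ Bpart idf D P v) ∧
    (∀ v ∈ D, (G.induce (Bpart idf D P v)).Connected) ∧
    (∀ v ∈ D, ∀ w ∈ Bpart idf D P v,
      ∃ p : G.Walk v w, p.length ≤ r ∧ ∀ x ∈ p.support, x ∈ Bpart idf D P v) ∧
    (SimpleGraph.fromRel (fun u v : D =>
        ∃ a ∈ Bpart idf D P u.1, ∃ b ∈ Bpart idf D P v.1, G.Adj a b)).Connected := by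
  classical
  have hD' : ∀ w : V, ∃ v ∈ D, ∃ p : G.Walk v w, p.length ≤ r := hD
  refine ⟨fun v hv => ⟨v, mem_self hP v⟩, ?_, fun w => cover (r := r) hD' w, ?_, ?_, ?_⟩
  · intro v hv u hu hne
    rw [Set.disjoint_left]
    intro w hwv hwu
    exact unique_part hinj hv hu hne hwv hwu
  · intro v hv
    rw [SimpleGraph.connected_iff]
    refine ⟨fun a b => ?_, ⟨⟨v, mem_self hP v⟩⟩⟩
    have ra : (G.induce (Bpart idf D P v)).Reachable ⟨v, mem_self hP v⟩ ⟨a.1, a.2⟩ :=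
      reach_induce (P v a.1) (fun x hx => prefix_mem hinj hP a.2 hx) (mem_self hP v) a.2
    have rb : (G.induce (Bpart idf D P v)).Reachable ⟨v, mem_self hP v⟩ ⟨b.1, b.2⟩ :=
      reach_induce (P v b.1) (fun x hx => prefix_mem hinj hP b.2 hx) (mem_self hP v) b.2
    exact ra.symm.trans rb
  · intro v hv w hw
    exact ⟨P v w, short_path hD' hP hv hw, fun x hx => prefix_mem hinj hP hw hx⟩
  · have hne : Nonempty V := hG.nonempty
    obtain ⟨d0, hd0, -⟩ := hD' (Classical.arbitrary V)
    rw [SimpleGraph.connected_iff]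
    refine ⟨fun a b => ?_, ⟨⟨d0, hd0⟩⟩⟩
    obtain ⟨d, hd⟩ := a
    obtain ⟨e, he⟩ := b
    exact H_reach (r := r) hinj hP hD' ((hG.preconnected d e).some)
      d hd (mem_self hP d) e he (mem_self hP e)
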